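/- Let L be a subdirectly irreducible pk-algebra such that every prime filter of L that is not maximal is contained in every maximal prime filter, and such that every prime filter P in Body(L) satisfies φ(P) = P (i.e. the dual space of L is of Type 1 or Type 2). Then L satisfies T(a)* ∨ C(b) = C(a) ∨ T(b)* for all a, b ∈ L. -/
import Mathlib


/-- A pseudocomplemented De Morgan algebra (pm-algebra): a bounded distributive
lattice with a De Morgan involution `dm` and a pseudocomplement `pc`. -/
class PMAlgebra (L : Type*) extends DistribLattice L, BoundedOrder L where
  dm : L → L
  pc : L → L
  dm_dm : ∀ a : L, dm (dm a) = a
  dm_inf : ∀ a b : L, dm (a ⊓ b) = dm a ⊔ dm b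
  pc_iff : ∀ a b : L, a ⊓ b = ⊥ ↔ b ≤ pc a

namespace PMAlgebra

variable {L : Type*} [PMAlgebra L]

/-- A congruence of a pm-algebra. -/
def IsCongruence (θ : L → L → Prop) : Prop :=
  Equivalence θ ∧
  (∀ a b c d : L, θ a b → θ c d → θ (a ⊓ c) (b ⊓ d)) ∧
  (∀ a b c d : L, θ a b → θ c d → θ (a ⊔ c) (b ⊔ d)) ∧
  (∀ a b : L, θ a b → θ (dm a) (dm b)) ∧
  (∀ a b : L, θ a b → θ (pc a) (pc b))

/-- `L` is simple: it has more than one element and its only congruences are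
equality and the total relation. -/
def Simple (L : Type*) [PMAlgebra L] : Prop :=
  Nontrivial L ∧ ∀ θ : L → L → Prop, IsCongruence θ →
    θ = (fun a b => a = b) ∨ θ = (fun _ _ => True)

/-- `L` is subdirectly irreducible: there is a congruence `μ ≠ Eq` contained in
every congruence different from equality. -/
def SubdirectlyIrreducible (L : Type*) [PMAlgebra L] : Prop :=
  ∃ μ : L → L → Prop, IsCongruence μ ∧ μ ≠ (fun a b => a = b) ∧
    ∀ θ : L → L → Prop, IsCongruence θ → θ ≠ (fun a b => a = b) →
      ∀ a b : L, μ a b → θ a b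

/-- A prime filter of the underlying lattice of `L`. -/
def IsPrimeFilter (P : Set L) : Prop :=
  P.Nonempty ∧ P ≠ Set.univ ∧
  (∀ a b : L, a ∈ P → a ≤ b → b ∈ P) ∧
  (∀ a b : L, a ∈ P → b ∈ P → a ⊓ b ∈ P) ∧
  (∀ a b : L, a ⊔ b ∈ P → a ∈ P ∨ b ∈ P)

/-- The Birula–Rasiowa transformation. -/
def phi (P : Set L) : Set L := {a : L | dm a ∉ P}

/-- `P` is a maximal prime filter. -/
def IsMaximalPF (P : Set L) : Prop :=
  IsPrimeFilter P ∧ ∀ Q : Set L, IsPrimeFilter Q → P ⊆ Q → Q = P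

/-- `P` is a minimal prime filter. -/
def IsMinimalPF (P : Set L) : Prop :=
  IsPrimeFilter P ∧ ∀ Q : Set L, IsPrimeFilter Q → Q ⊆ P → Q = P

/-- The body of `L`: prime filters that are neither maximal nor minimal. -/
def body (L : Type*) [PMAlgebra L] : Set (Set L) :=
  {P : Set L | IsPrimeFilter P ∧ ¬ IsMaximalPF P ∧ ¬ IsMinimalPF P}

/-- The prime filter space of `L` is φ-connected. -/
def PhiConnected (L : Type*) [PMAlgebra L] : Prop :=
  ∀ S : Set (Set L), S ⊆ {P : Set L | IsPrimeFilter P} → S.Nonempty →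
    (∀ P Q : Set L, P ∈ S → IsPrimeFilter Q → P ⊆ Q → Q ∈ S) →
    (∀ P Q : Set L, P ∈ S → IsPrimeFilter Q → Q ⊆ P → Q ∈ S) →
    (∀ P : Set L, P ∈ S → phi P ∈ S) →
    S = {P : Set L | IsPrimeFilter P}

/-- The Kleene identity. -/
def Kleene (L : Type*) [PMAlgebra L] : Prop :=
  ∀ a b : L, a ⊓ dm a ≤ b ⊔ dm b

/-- The term `C(x) = (x ∧ x') ∨ (x ∧ x')*`. -/
def C (x : L) : L := (x ⊓ dm x) ⊔ pc (x ⊓ dm x)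

/-- The term `T(x) = C(x) ∧ C(x)'`. -/
def T (x : L) : L := C x ⊓ dm (C x)

end PMAlgebra

open PMAlgebra

section Aux

variable {L : Type*} [PMAlgebra L]

lemma my_dm_top : dm (⊤ : L) = ⊥ := by
  have h := dm_inf (dm (⊥ : L)) (⊤ : L)
  rw [inf_top_eq, dm_dm, bot_sup_eq] at h
  exact h.symm

lemma my_dm_bot : dm (⊥ : L) = ⊤ := by
  have := dm_dm (⊤ : L); rwa [my_dm_top] at this

lemma my_dm_anti {a b : L} (h : a ≤ b) : dm b ≤ dm a := by
  have h2 := dm_inf a b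
  rw [inf_eq_left.mpr h] at h2
  rw [h2]; exact le_sup_right

lemma my_pc_inf (a : L) : a ⊓ pc a = ⊥ := (pc_iff a (pc a)).2 le_rfl

lemma my_pc_bot : pc (⊥ : L) = ⊤ :=
  le_antisymm le_top ((pc_iff ⊥ ⊤).1 (by simp))

lemma pf_top {P : Set L} (hP : IsPrimeFilter P) : (⊤ : L) ∈ P := by
  obtain ⟨⟨a, ha⟩, _, hup, _, _⟩ := hP
  exact hup a ⊤ ha le_top

lemma pf_bot {P : Set L} (hP : IsPrimeFilter P) : (⊥ : L) ∉ P := by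
  intro h
  exact hP.2.1 (Set.eq_univ_of_forall fun x => hP.2.2.1 ⊥ x h bot_le)

/-- Prime filter theorem: a filter missing `v` extends to a prime filter missing `v`. -/
lemma pft {F : Set L} (hne : F.Nonempty)
    (hup : ∀ a b : L, a ∈ F → a ≤ b → b ∈ F)
    (hinf : ∀ a b : L, a ∈ F → b ∈ F → a ⊓ b ∈ F)
    {v : L} (hv : v ∉ F) :
    ∃ P : Set L, IsPrimeFilter P ∧ F ⊆ P ∧ v ∉ P := by
  classical
  set S : Set (Set L) := {G | F ⊆ G ∧ v ∉ G ∧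
    (∀ a b : L, a ∈ G → a ≤ b → b ∈ G) ∧ (∀ a b : L, a ∈ G → b ∈ G → a ⊓ b ∈ G)} with hS
  have hchain : ∀ c ⊆ S, IsChain (· ⊆ ·) c → c.Nonempty →
      ∃ ub ∈ S, ∀ s ∈ c, s ⊆ ub := by
    intro c hcS hc ⟨G0, hG0⟩
    refine ⟨⋃₀ c, ⟨?_, ?_, ?_, ?_⟩, fun s hs => Set.subset_sUnion_of_mem hs⟩
    · exact (hcS hG0).1.trans (Set.subset_sUnion_of_mem hG0)
    · rintro ⟨G, hG, hvG⟩; exact (hcS hG).2.1 hvG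
    · rintro a b ⟨G, hG, haG⟩ hab
      exact ⟨G, hG, (hcS hG).2.2.1 a b haG hab⟩
    · rintro a b ⟨G1, hG1, ha⟩ ⟨G2, hG2, hb⟩
      rcases hc.total hG1 hG2 with h12 | h21
      · exact ⟨G2, hG2, (hcS hG2).2.2.2 a b (h12 ha) hb⟩
      · exact ⟨G1, hG1, (hcS hG1).2.2.2 a b ha (h21 hb)⟩
  obtain ⟨M, hFM, hM⟩ := zorn_subset_nonempty S hchain F ⟨Set.Subset.rfl, hv, hup, hinf⟩
  obtain ⟨hFM', hvM, hMup, hMinf⟩ := hM.prop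
  refine ⟨M, ⟨?_, ?_, hMup, hMinf, ?_⟩, hFM, hvM⟩
  · obtain ⟨a, ha⟩ := hne; exact ⟨a, hFM' ha⟩
  · intro h; exact hvM (h ▸ Set.mem_univ v)
  · -- primality by maximality
    intro a b hab
    by_contra hcon
    push_neg at hcon
    obtain ⟨haM, hbM⟩ := hcon
    have key : ∀ x : L, x ∉ M → x ⊔ a ⊔ b ∈ M → ∃ g ∈ M, g ⊓ x ≤ v := by
      intro x hx _
      set Gx : Set L := {z | ∃ g ∈ M, g ⊓ x ≤ z} with hGx
      by_cases hvx : v ∈ Gx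
      · exact hvx
      · exfalso
        have hGxS : Gx ∈ S := by
          refine ⟨fun y hy => ⟨y, hFM' hy, inf_le_left⟩, hvx, ?_, ?_⟩
          · rintro p q ⟨g, hg, hgp⟩ hpq; exact ⟨g, hg, hgp.trans hpq⟩
          · rintro p q ⟨g1, hg1, h1⟩ ⟨g2, hg2, h2⟩
            exact ⟨g1 ⊓ g2, hMinf _ _ hg1 hg2, by
              calc g1 ⊓ g2 ⊓ x ≤ (g1 ⊓ x) ⊓ (g2 ⊓ x) :=
                    le_inf (inf_le_inf inf_le_left le_rfl) (inf_le_inf inf_le_right le_rfl)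
                _ ≤ p ⊓ q := inf_le_inf h1 h2⟩
        have hMGx : M ⊆ Gx := fun y hy => ⟨y, hy, inf_le_left⟩
        have := hM.eq_of_ge hGxS hMGx
        exact hx (this ▸ ⟨⊤, hMup _ _ (hFM' (hup _ _ hne.choose_spec le_top)) le_rfl, by simp⟩)
    obtain ⟨g1, hg1, h1⟩ := key a haM (hMup _ _ hab (by simp [le_sup_iff]))
    obtain ⟨g2, hg2, h2⟩ := key b hbM (hMup _ _ hab (by simp [le_sup_iff]))
    have : (g1 ⊓ g2) ⊓ (a ⊔ b) ≤ v := by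
      rw [inf_sup_left]
      apply sup_le
      · exact le_trans (inf_le_inf inf_le_left le_rfl) h1
      · exact le_trans (inf_le_inf inf_le_right le_rfl) h2
    exact hvM (hMup _ _ (hMinf _ _ (hMinf _ _ hg1 hg2) hab) this)

lemma pft_le {u v : L} (h : ¬ u ≤ v) :
    ∃ P : Set L, IsPrimeFilter P ∧ u ∈ P ∧ v ∉ P := by
  obtain ⟨P, hP, hsub, hv⟩ := pft (F := {z : L | u ≤ z}) ⟨u, le_rfl⟩
    (fun a b ha hab => le_trans ha hab) (fun a b ha hb => le_inf ha hb) h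
  exact ⟨P, hP, hsub le_rfl, hv⟩

lemma pf_exists_of_ne_bot {a : L} (h : a ≠ ⊥) :
    ∃ P : Set L, IsPrimeFilter P ∧ a ∈ P := by
  obtain ⟨P, hP, ha, _⟩ := pft_le (u := a) (v := ⊥) (fun hle => h (le_bot_iff.mp hle))
  exact ⟨P, hP, ha⟩

lemma phi_prime {P : Set L} (hP : IsPrimeFilter P) : IsPrimeFilter (phi P) := by
  classical
  obtain ⟨hne, hnu, hup, hinf, hpr⟩ := hP
  refine ⟨⟨⊤, ?_⟩, ?_, ?_, ?_, ?_⟩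
  · show dm (⊤:L) ∉ P
    rw [my_dm_top]; exact pf_bot ⟨hne, hnu, hup, hinf, hpr⟩
  · intro h
    have : (⊥:L) ∈ phi P := h ▸ Set.mem_univ ⊥
    exact this (by rw [my_dm_bot]; exact pf_top ⟨hne, hnu, hup, hinf, hpr⟩)
  · intro a b ha hab hb
    exact ha (hup _ _ hb (my_dm_anti hab))
  · intro a b ha hb h
    rw [dm_inf] at h
    rcases hpr _ _ h with h' | h'
    · exact ha h'
    · exact hb h'
  · intro a b h
    by_contra hcon
    push_neg at hcon
    obtain ⟨ha, hb⟩ := hcon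
    simp only [phi, Set.mem_setOf_eq, not_not] at ha hb
    apply h
    have : dm (a ⊔ b) = dm a ⊓ dm b := by
      have h2 := dm_inf (dm a) (dm b)
      rw [dm_dm, dm_dm] at h2
      have := congrArg dm h2
      rw [dm_dm] at this
      exact this.symm
    rw [this]
    exact hinf _ _ ha hb

lemma phi_phi (P : Set L) : phi (phi P) = P := by
  classical
  ext a
  simp [phi, dm_dm]

lemma phi_anti {P Q : Set L} (h : P ⊆ Q) : phi Q ⊆ phi P :=
  fun _ ha hb => ha (h hb)

lemma mem_phi_iff {P : Set L} {a : L} : a ∈ phi P ↔ dm a ∉ P := Iff.rfl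

/-- Kleene dichotomy for prime filters. -/
lemma kleene_dichotomy (hk : Kleene L) {P : Set L} (hP : IsPrimeFilter P) :
    P ⊆ phi P ∨ phi P ⊆ P := by
  classical
  by_contra hcon
  push_neg at hcon
  obtain ⟨h1, h2⟩ := hcon
  obtain ⟨s, hsP, hsphi⟩ := Set.not_subset.mp h1
  obtain ⟨t, htphi, htP⟩ := Set.not_subset.mp h2
  simp only [phi, Set.mem_setOf_eq, not_not] at hsphi htphi
  have hs' : s ⊓ dm s ∈ P := hP.2.2.2.1 _ _ hsP hsphi
  have := hP.2.2.1 _ _ hs' (hk s t)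
  rcases hP.2.2.2.2 _ _ this with h | h
  · exact htP h
  · exact htphi h

/-- Characterization of pseudocomplement membership. -/
lemma pc_mem_iff {P : Set L} (hP : IsPrimeFilter P) (a : L) :
    pc a ∈ P ↔ ∀ R : Set L, IsPrimeFilter R → P ⊆ R → a ∉ R := by
  constructor
  · intro h R hR hPR haR
    have : (⊥:L) ∈ R := by
      rw [← my_pc_inf a]; exact hR.2.2.2.1 _ _ haR (hPR h)
    exact pf_bot hR this
  · intro h
    by_contra hpc
    have hbot : (⊥:L) ∉ {z : L | ∃ p ∈ P, p ⊓ a ≤ z} := by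
      rintro ⟨p, hp, hpa⟩
      have : p ≤ pc a := (pc_iff a p).1 (by rw [inf_comm]; exact le_bot_iff.mp hpa)
      exact hpc (hP.2.2.1 _ _ hp this)
    obtain ⟨R, hR, hsub, _⟩ := pft (F := {z : L | ∃ p ∈ P, p ⊓ a ≤ z})
      ⟨a, ⊤, pf_top hP, by simp⟩
      (fun x y hx hxy => by obtain ⟨p, hp, h1⟩ := hx; exact ⟨p, hp, h1.trans hxy⟩)
      (fun x y hx hy => by
        obtain ⟨p, hp, h1⟩ := hx; obtain ⟨q, hq, h2⟩ := hy
        refine ⟨p ⊓ q, hP.2.2.2.1 _ _ hp hq, ?_⟩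
        calc p ⊓ q ⊓ a ≤ (p ⊓ a) ⊓ (q ⊓ a) :=
              le_inf (inf_le_inf inf_le_left le_rfl) (inf_le_inf inf_le_right le_rfl)
          _ ≤ x ⊓ y := inf_le_inf h1 h2)
      hbot
    have hPR : P ⊆ R := fun p hp => hsub ⟨p, hp, inf_le_left⟩
    exact h R hR hPR (hsub ⟨⊤, pf_top hP, by simp⟩)

/-- Every prime filter is contained in a maximal one. -/
lemma exists_maximal_pf {P : Set L} (hP : IsPrimeFilter P) :
    ∃ Q : Set L, IsMaximalPF Q ∧ P ⊆ Q := by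
  set S : Set (Set L) := {Q | IsPrimeFilter Q ∧ P ⊆ Q} with hS
  have hchain : ∀ c ⊆ S, IsChain (· ⊆ ·) c → c.Nonempty →
      ∃ ub ∈ S, ∀ s ∈ c, s ⊆ ub := by
    intro c hcS hc ⟨G0, hG0⟩
    refine ⟨⋃₀ c, ⟨⟨⟨⊤, G0, hG0, pf_top (hcS hG0).1⟩, ?_, ?_, ?_, ?_⟩,
      (hcS hG0).2.trans (Set.subset_sUnion_of_mem hG0)⟩,
      fun s hs => Set.subset_sUnion_of_mem hs⟩
    · intro h
      have : (⊥:L) ∈ ⋃₀ c := h ▸ Set.mem_univ ⊥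
      obtain ⟨G, hG, hbG⟩ := this
      exact pf_bot (hcS hG).1 hbG
    · rintro a b ⟨G, hG, haG⟩ hab
      exact ⟨G, hG, (hcS hG).1.2.2.1 a b haG hab⟩
    · rintro a b ⟨G1, hG1, ha⟩ ⟨G2, hG2, hb⟩
      rcases hc.total hG1 hG2 with h12 | h21
      · exact ⟨G2, hG2, (hcS hG2).1.2.2.2.1 a b (h12 ha) hb⟩
      · exact ⟨G1, hG1, (hcS hG1).1.2.2.2.1 a b ha (h21 hb)⟩
    · rintro a b ⟨G, hG, hab⟩
      rcases (hcS hG).1.2.2.2.2 a b hab with h | h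
      · exact Or.inl ⟨G, hG, h⟩
      · exact Or.inr ⟨G, hG, h⟩
  obtain ⟨M, hPM, hM⟩ := zorn_subset_nonempty S hchain P ⟨hP, Set.Subset.rfl⟩
  refine ⟨M, ⟨hM.prop.1, ?_⟩, hM.prop.2⟩
  intro Q hQ hMQ
  exact hM.eq_of_ge ⟨hQ, hM.prop.2.trans hMQ⟩ hMQ

/-- Every prime filter contains a minimal one. -/
lemma exists_minimal_pf {P : Set L} (hP : IsPrimeFilter P) :
    ∃ Q : Set L, IsMinimalPF Q ∧ Q ⊆ P := by
  classical
  set S : Set (Set L) := {Q | IsPrimeFilter Q ∧ Q ⊆ P} with hS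
  have hchain : ∀ c ⊆ S, IsChain (· ⊆ ·) c → c.Nonempty →
      ∃ lb ∈ S, ∀ s ∈ c, lb ⊆ s := by
    intro c hcS hc ⟨G0, hG0⟩
    refine ⟨⋂₀ c, ⟨⟨⟨⊤, fun G hG => pf_top (hcS hG).1⟩, ?_, ?_, ?_, ?_⟩,
      (Set.sInter_subset_of_mem hG0).trans (hcS hG0).2⟩,
      fun s hs => Set.sInter_subset_of_mem hs⟩
    · intro h
      have : (⊥:L) ∈ ⋂₀ c := h ▸ Set.mem_univ ⊥
      exact pf_bot (hcS hG0).1 (this G0 hG0)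
    · intro a b ha hab G hG
      exact (hcS hG).1.2.2.1 a b (ha G hG) hab
    · intro a b ha hb G hG
      exact (hcS hG).1.2.2.2.1 a b (ha G hG) (hb G hG)
    · intro a b hab
      by_contra hcon
      push_neg at hcon
      obtain ⟨ha, hb⟩ := hcon
      simp only [Set.mem_sInter, not_forall] at ha hb
      obtain ⟨G1, hG1, ha⟩ := ha
      obtain ⟨G2, hG2, hb⟩ := hb
      rcases hc.total hG1 hG2 with h12 | h21
      · rcases (hcS hG1).1.2.2.2.2 a b (hab G1 hG1) with h | h
        · exact ha h
        · exact hb (h12 h)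
      · rcases (hcS hG2).1.2.2.2.2 a b (hab G2 hG2) with h | h
        · exact ha (h21 h)
        · exact hb h
  obtain ⟨M, hMP, hM⟩ := zorn_superset_nonempty S hchain P ⟨hP, Set.Subset.rfl⟩
  refine ⟨M, ⟨hM.prop.1, ?_⟩, hM.prop.2⟩
  intro Q hQ hQM
  exact hM.eq_of_le ⟨hQ, hQM.trans hM.prop.2⟩ hQM

/-- A minimal prime filter fixed under inclusion of its phi is maximal;
more precisely, if `m` is minimal then `phi m` is maximal. -/
lemma phi_min_maximal {m : Set L} (hm : IsMinimalPF m) : IsMaximalPF (phi m) := by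
  refine ⟨phi_prime hm.1, ?_⟩
  intro R hR hsub
  have h1 : phi R ⊆ phi (phi m) := phi_anti hsub
  rw [phi_phi] at h1
  have h2 : phi R = m := hm.2 (phi R) (phi_prime hR) h1
  calc R = phi (phi R) := (phi_phi R).symm
    _ = phi m := by rw [h2]

lemma phi_max_of_max {Q : Set L} (hk : Kleene L) (hQ : IsMaximalPF Q) : phi Q ⊆ Q := by
  rcases kleene_dichotomy hk hQ.1 with h | h
  · rw [hQ.2 (phi Q) (phi_prime hQ.1) h]
  · exact h

lemma sup_dm_mem_max {Q : Set L} (hk : Kleene L) (hQ : IsMaximalPF Q) (x : L) :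
    x ⊔ dm x ∈ Q := by
  classical
  by_cases hx : x ∈ Q
  · exact hQ.1.2.2.1 _ _ hx le_sup_left
  · have : x ∉ phi Q := fun h => hx (phi_max_of_max hk hQ h)
    simp only [phi, Set.mem_setOf_eq, not_not] at this
    exact hQ.1.2.2.1 _ _ this le_sup_right

lemma C_mem_max {Q : Set L} (hk : Kleene L) (hQ : IsMaximalPF Q) (x : L) :
    C x ∈ Q := by
  classical
  by_cases hd : x ⊓ dm x ∈ Q
  · exact hQ.1.2.2.1 _ _ hd le_sup_left
  · have : pc (x ⊓ dm x) ∈ Q := by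
      rw [pc_mem_iff hQ.1]
      intro R hR hQR hdR
      rw [hQ.2 R hR hQR] at hdR
      exact hd hdR
    exact hQ.1.2.2.1 _ _ this le_sup_right

/-- In a prime filter that is minimal or (non-maximal, via `hfix`) in the body,
no element lies in it together with its De Morgan negation, unless the filter is maximal. -/
lemma no_kleene_pair {P : Set L} (hk : Kleene L)
    (hfix : ∀ P ∈ body L, phi P = P)
    (hP : IsPrimeFilter P) (hnmax : ¬ IsMaximalPF P) {y : L}
    (hy : y ∈ P) (hy' : dm y ∈ P) : False := by
  classical
  have hsub : P ⊆ phi P := by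
    rcases kleene_dichotomy hk hP with h | h
    · exact h
    · by_cases hmin : IsMinimalPF P
      · have : phi P = P := hmin.2 (phi P) (phi_prime hP) h
        have : IsMaximalPF P := by
          have := phi_min_maximal hmin
          rwa [‹phi P = P›] at this
        exact absurd this hnmax
      · have : phi P = P := hfix P ⟨hP, hnmax, hmin⟩
        rw [this]
  exact (hsub hy) hy'

/-- Same for minimal prime filters (even if also maximal). -/
lemma no_kleene_pair_min {P : Set L} (hk : Kleene L)
    (hP : IsMinimalPF P) {y : L}
    (hy : y ∈ P) (hy' : dm y ∈ P) : False := by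
  classical
  rcases kleene_dichotomy hk hP.1 with h | h
  · exact (h hy) hy'
  · have heq : phi P = P := hP.2 (phi P) (phi_prime hP.1) h
    rw [← heq] at hy
    exact hy hy'
    
/-- If `x ⊓ dm x ≠ ⊥` then some maximal prime filter contains `T x`. -/
lemma exists_max_T (hk : Kleene L) {x : L} (hd : x ⊓ dm x ≠ ⊥) :
    ∃ Q : Set L, IsMaximalPF Q ∧ T x ∈ Q := by
  classical
  obtain ⟨R0, hR0, hdR0⟩ := pf_exists_of_ne_bot hd
  obtain ⟨m, hm, hmR0⟩ := exists_minimal_pf hR0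
  have hQmax : IsMaximalPF (phi m) := phi_min_maximal hm
  refine ⟨phi m, hQmax, ?_⟩
  have hC : C x ∈ phi m := C_mem_max hk hQmax x
  have hCm : C x ∉ m := by
    intro hCm
    rcases hm.1.2.2.2.2 _ _ hCm with h | h
    · exact no_kleene_pair_min hk hm
        (hm.1.2.2.1 _ _ h inf_le_left) (hm.1.2.2.1 _ _ h inf_le_right)
    · have : (⊥:L) ∈ R0 := by
        rw [← my_pc_inf (x ⊓ dm x)]
        exact hR0.2.2.2.1 _ _ hdR0 (hmR0 h)
      exact pf_bot hR0 this
  have hdmC : dm (C x) ∈ phi m := by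
    show dm (dm (C x)) ∉ m
    rwa [dm_dm]
  exact hQmax.1.2.2.2.1 _ _ hC hdmC

lemma T_eq_bot {x : L} (h : x ⊓ dm x = ⊥) : T x = ⊥ := by
  have hC : C x = ⊤ := by
    rw [C, h, my_pc_bot, bot_sup_eq]
  rw [T, hC, my_dm_top, inf_bot_eq]

lemma C_eq_top {x : L} (h : x ⊓ dm x = ⊥) : C x = ⊤ := by
  rw [C, h, my_pc_bot, bot_sup_eq]

end Aux

/-- A subdirectly irreducible pk-algebra whose dual space is of Type 1 or 2
(every non-maximal prime filter is below every maximal one and every body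
element is a fixed point of `φ`) satisfies `T(a)* ∨ C(b) = C(a) ∨ T(b)*`. -/
theorem gamma_symmetric_of_type12 {L : Type*} [PMAlgebra L]
    (hk : Kleene L) (hsi : SubdirectlyIrreducible L)
    (hbundle : ∀ P Q : Set L, IsPrimeFilter P → ¬ IsMaximalPF P →
      IsMaximalPF Q → P ⊆ Q)
    (hfix : ∀ P ∈ body L, phi P = P) :
    ∀ a b : L, pc (T a) ⊔ C b = C a ⊔ pc (T b) := by
  classical
  have key : ∀ x y : L, ∀ P : Set L, IsPrimeFilter P →
      pc (T x) ⊔ C y ∈ P → C x ⊔ pc (T y) ∈ P := by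
    intro x y P hP hmem
    by_cases hmax : IsMaximalPF P
    · exact hP.2.2.1 _ _ (C_mem_max hk hmax x) le_sup_left
    · rcases hP.2.2.2.2 _ _ hmem with h | h
      · -- `pc (T x) ∈ P`, deduce `x ⊓ dm x = ⊥`, hence `C x = ⊤`.
        have hd : x ⊓ dm x = ⊥ := by
          by_contra hd
          obtain ⟨Q, hQ, hTQ⟩ := exists_max_T hk hd
          have hPQ : P ⊆ Q := hbundle P Q hP hmax hQ
          have hbQ : (⊥:L) ∈ Q := by
            rw [← my_pc_inf (T x)]
            exact hQ.1.2.2.2.1 _ _ hTQ (hPQ h)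
          exact pf_bot hQ.1 hbQ
        have hCx : C x ∈ P := by rw [C_eq_top hd]; exact pf_top hP
        exact hP.2.2.1 _ _ hCx le_sup_left
      · -- `C y ∈ P`, deduce `y ⊓ dm y = ⊥`, hence `pc (T y) = ⊤`.
        have he : y ⊓ dm y = ⊥ := by
          rcases hP.2.2.2.2 _ _ h with h1 | h1
          · exact (no_kleene_pair hk hfix hP hmax
              (hP.2.2.1 _ _ h1 inf_le_left) (hP.2.2.1 _ _ h1 inf_le_right)).elim
          · by_contra he
            obtain ⟨R0, hR0, heR0⟩ := pf_exists_of_ne_bot he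
            obtain ⟨Q0, hQ0, hRQ0⟩ := exists_maximal_pf hR0
            have hPQ0 : P ⊆ Q0 := hbundle P Q0 hP hmax hQ0
            have hbQ0 : (⊥:L) ∈ Q0 := by
              rw [← my_pc_inf (y ⊓ dm y)]
              exact hQ0.1.2.2.2.1 _ _ (hRQ0 heR0) (hPQ0 h1)
            exact pf_bot hQ0.1 hbQ0
        have hT : pc (T y) ∈ P := by
          rw [T_eq_bot he, my_pc_bot]; exact pf_top hP
        exact hP.2.2.1 _ _ hT le_sup_right
  intro a b
  apply le_antisymm
  · by_contra hle
    obtain ⟨P, hP, hu, hv⟩ := pft_le hle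
    exact hv (key a b P hP hu)
  · by_contra hle
    obtain ⟨P, hP, hu, hv⟩ := pft_le hle
    have hu' : pc (T b) ⊔ C a ∈ P := by rwa [sup_comm] at hu
    have hc := key b a P hP hu'
    rw [sup_comm] at hc
    exact hv hc
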